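/- Let 𝒱 be the category of ℤ×ℕ-graded 𝕜-modules and let X ∈ Ob 𝒱 satisfy X^p_0 = 0 for all p ∈ ℤ. Then the homotopy coalgebra morphism e : XT → X T̃, defined by e(I)·pr_n = (⊗^{i∈I} pr_{n_i})·λ^{⊔_i n_i → I} for n ∈ ℕ^I, is an isomorphism of homotopy coalgebras. -/

import Mathlib

/-!
Statement 17: Let `𝒱` be the category of `ℤ×ℕ`-graded `𝕜`-modules and `X ∈ Ob 𝒱` with
`X^p_0 = 0` for all `p`.  Then the canonical homotopy coalgebra morphism `e : XT → X T̃`,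
defined by `e(I)·pr_n = (⊗ᵢ pr_{nᵢ})·λ^{⊔ᵢnᵢ→I}`, is an isomorphism of homotopy coalgebras.

The `ℤ×ℕ`-graded structure of `𝒱` is encoded by the structure `Bigraded`: a family of
corepresenting objects `gen p i` (the free modules `𝕜⟨p,i⟩`, so that `X^p_i = 𝒱(gen p i, X)`)
which jointly detect isomorphisms, such that a tensor product of `n` objects with vanishing
weight-`0` components has vanishing components in weights `< n`, and such that the components
of `XT^{⊗I}` are the direct sums of the components of its summands.  `X^p_0 = 0` is the
statement that `𝒱(gen p 0, X) = 0`.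
-/


open CategoryTheory Category Limits

universe v u

namespace Paper

/-- The number of elements of the fiber `φ⁻¹(j)` of a monotone map of finite ordinals. -/
def fiberCard {I J : ℕ} (φ : Fin I →o Fin J) (j : Fin J) : ℕ :=
  (Finset.univ.filter fun i => φ i = j).card

/-- The monotone enumeration of the fiber `φ⁻¹(j)`. -/
noncomputable def fiberEmb {I J : ℕ} (φ : Fin I →o Fin J) (j : Fin J)
    (p : Fin (fiberCard φ j)) : Fin I :=
  (((Finset.univ.filter fun i => φ i = j).orderIsoOfFin rfl) p).1

/-- `ψ` is the monotone map `⊔ᵢ nᵢ → I` sending the `i`-th block (of size `nᵢ`) to `i`;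
a monotone map is uniquely determined by its fiber cardinalities. -/
def IsBlockMap {I : ℕ} (n : Fin I → ℕ) (ψ : Fin (∑ i, n i) →o Fin I) : Prop :=
  ∀ i, fiberCard ψ i = n i

/-- The push-forward `φ_* k` of a multi-index: `(φ_* k)_j = ∑_{i ∈ φ⁻¹ j} k_i`. -/
noncomputable def pushf {I J : ℕ} (φ : Fin I →o Fin J) (k : Fin I → ℕ) (j : Fin J) : ℕ :=
  ∑ p, k (fiberEmb φ j p)

variable (V : Type u) [Category.{v} V]

/-- The data of a (strict) colax Monoidal structure on `V`: unbiased tensor products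
`⊗^{i∈I} Xᵢ` of finite families, and structure morphisms
`λ^φ : ⊗^{j∈J} ⊗^{i∈φ⁻¹j} Xᵢ ⟶ ⊗^{i∈I} Xᵢ` for monotone `φ : I → J`. -/
structure ColaxSetting where
  tens : ∀ {n : ℕ}, (Fin n → V) → V
  tensHom : ∀ {n : ℕ} {X Y : Fin n → V}, (∀ i, X i ⟶ Y i) → (tens X ⟶ tens Y)
  tensHom_id : ∀ {n : ℕ} (X : Fin n → V), tensHom (fun i => 𝟙 (X i)) = 𝟙 (tens X)
  tensHom_comp : ∀ {n : ℕ} {X Y Z : Fin n → V} (f : ∀ i, X i ⟶ Y i) (g : ∀ i, Y i ⟶ Z i),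
      tensHom (fun i => f i ≫ g i) = tensHom f ≫ tensHom g
  tens_single : ∀ (X : Fin 1 → V), tens X = X 0
  lam : ∀ {I J : ℕ} (φ : Fin I →o Fin J) (X : Fin I → V),
      tens (fun j => tens (fun p => X (fiberEmb φ j p))) ⟶ tens X
  lam_natural : ∀ {I J : ℕ} (φ : Fin I →o Fin J) {X Y : Fin I → V} (f : ∀ i, X i ⟶ Y i),
      tensHom (fun j => tensHom (fun p => f (fiberEmb φ j p))) ≫ lam φ Y
        = lam φ X ≫ tensHom f

variable {V}

/-- Tensor powers `X^{⊗n}`. -/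
def ColaxSetting.pow (S : ColaxSetting V) (X : V) (n : ℕ) : V := S.tens (fun _ : Fin n => X)

theorem ColaxSetting.pow_eq (S : ColaxSetting V) (X : V) {c d : ℕ} (h : c = d) :
    S.pow X c = S.pow X d := by subst h; rfl

/-- When all structure morphisms `λ^φ` are invertible, `(V, ⊗, λ)` is Monoidal
(rather than merely colax Monoidal). -/
structure ColaxSetting.Monoidal (S : ColaxSetting V) where
  lamInv : ∀ {I J : ℕ} (φ : Fin I →o Fin J) (X : Fin I → V),
      S.tens X ⟶ S.tens (fun j => S.tens (fun p => X (fiberEmb φ j p)))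
  lam_lamInv : ∀ {I J : ℕ} (φ : Fin I →o Fin J) (X : Fin I → V),
      S.lam φ X ≫ lamInv φ X = 𝟙 _
  lamInv_lam : ∀ {I J : ℕ} (φ : Fin I →o Fin J) (X : Fin I → V),
      lamInv φ X ≫ S.lam φ X = 𝟙 _

/-- A homotopy coalgebra (= homotopy comonoid) in `V`: a lax Monoidal functor
`(O_sk^op, ⊔, id) → (V, ⊗, λ)`, unbiasedly unpacked. -/
structure HCoalgebra (S : ColaxSetting V) where
  obj : ℕ → V
  /-- the action of `C` on `φ^op` for a monotone map `φ : I → J` -/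
  map : ∀ {I J : ℕ}, (Fin I →o Fin J) → (obj J ⟶ obj I)
  map_id : ∀ I : ℕ, map (OrderHom.id (α := Fin I)) = 𝟙 (obj I)
  map_comp : ∀ {I J K : ℕ} (φ : Fin I →o Fin J) (ψ : Fin J →o Fin K),
      map (ψ.comp φ) = map ψ ≫ map φ
  /-- the lax Monoidal structure `χ^I_{N₁,…,N_I}` -/
  chi : ∀ {I : ℕ} (N : Fin I → ℕ), S.tens (fun i => obj (N i)) ⟶ obj (∑ i, N i)
  chi_one : ∀ (N : Fin 1 → ℕ) (h : S.tens (fun i => obj (N i)) = obj (∑ i, N i)),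
      chi N = eqToHom h
  /-- naturality of `χ^I` in its arguments; `Φ = ⊔ᵢ φᵢ` is the block sum of the `φᵢ`,
  characterized by preserving blocks and acting as `φᵢ` on the `i`-th block. -/
  chi_natural : ∀ {I : ℕ} {M N : Fin I → ℕ} (φ : ∀ i, Fin (M i) →o Fin (N i))
      (Φ : Fin (∑ i, M i) →o Fin (∑ i, N i))
      (ψM : Fin (∑ i, M i) →o Fin I) (hM : IsBlockMap M ψM)
      (ψN : Fin (∑ i, N i) →o Fin I) (hN : IsBlockMap N ψN)
      (_ : ∀ q, ψN (Φ q) = ψM q)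
      (_ : ∀ (i : Fin I) (p : Fin (fiberCard ψM i)),
        Φ (fiberEmb ψM i p) = fiberEmb ψN i (Fin.cast (hN i).symm (φ i (Fin.cast (hM i) p)))),
      S.tensHom (fun i => map (φ i)) ≫ chi M = chi N ≫ map Φ
  /-- compatibility of `χ` with the colax structure of `V` (diagram (2φ-1φ)). -/
  chi_assoc : ∀ {I J : ℕ} (φ : Fin I →o Fin J) (N : Fin I → ℕ)
      (h : obj (∑ j, ∑ p, N (fiberEmb φ j p)) = obj (∑ i, N i)),
      S.tensHom (fun j => chi (fun p => N (fiberEmb φ j p)))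
          ≫ chi (fun j => ∑ p, N (fiberEmb φ j p)) ≫ eqToHom h
        = S.lam φ (fun i => obj (N i)) ≫ chi N

/-- Morphisms of homotopy coalgebras: Monoidal transformations of lax Monoidal functors. -/
@[ext]
structure HCoalgHom {S : ColaxSetting V} (C G : HCoalgebra S) where
  app : ∀ n : ℕ, C.obj n ⟶ G.obj n
  naturality : ∀ {I J : ℕ} (φ : Fin I →o Fin J),
      app J ≫ G.map φ = C.map φ ≫ app I
  monoidality : ∀ {I : ℕ} (N : Fin I → ℕ),
      S.tensHom (fun i => app (N i)) ≫ G.chi N = C.chi N ≫ app (∑ i, N i)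

/-- The category `hCoalg` of homotopy coalgebras. -/
instance hCoalgCategory (S : ColaxSetting V) : Category (HCoalgebra S) where
  Hom := HCoalgHom
  id C := { app := fun n => 𝟙 _
            naturality := by intros; simp
            monoidality := by intros; rw [S.tensHom_id]; simp }
  comp {C G H} f g :=
    { app := fun n => f.app n ≫ g.app n
      naturality := by
        intro I J φ
        rw [assoc, g.naturality, ← assoc, f.naturality, assoc]
      monoidality := by
        intro I N
        rw [S.tensHom_comp, assoc, g.monoidality, ← assoc, f.monoidality, assoc] }
  id_comp f := by apply HCoalgHom.ext; funext n; simp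
  comp_id f := by apply HCoalgHom.ext; funext n; simp
  assoc f g h := by apply HCoalgHom.ext; funext n; simp

@[simp] theorem hc_id_app {S : ColaxSetting V} (C : HCoalgebra S) (n : ℕ) :
    HCoalgHom.app (𝟙 C) n = 𝟙 (C.obj n) := rfl

@[simp] theorem hc_comp_app {S : ColaxSetting V} {C G H : HCoalgebra S}
    (f : C ⟶ G) (g : G ⟶ H) (n : ℕ) :
    HCoalgHom.app (f ≫ g) n = HCoalgHom.app f n ≫ HCoalgHom.app g n := rfl

/-- An ordinary coalgebra in `V`: an object with compatible comultiplications `Δ_I`. -/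
structure OrdCoalgebra (S : ColaxSetting V) where
  pt : V
  delta : ∀ I : ℕ, pt ⟶ S.tens (fun _ : Fin I => pt)
  delta_one : ∀ h : pt = S.tens (fun _ : Fin 1 => pt), delta 1 = eqToHom h
  delta_comp : ∀ {I J : ℕ} (φ : Fin I →o Fin J),
      delta I = delta J ≫ S.tensHom (fun j => delta (fiberCard φ j)) ≫ S.lam φ (fun _ => pt)

/-- Morphisms of ordinary coalgebras. -/
structure OrdCoalgHom {S : ColaxSetting V} (C D : OrdCoalgebra S) where
  f : C.pt ⟶ D.pt
  compat : ∀ I : ℕ, f ≫ D.delta I = C.delta I ≫ S.tensHom (fun _ => f)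

/-- `CH` is the homotopy coalgebra induced by the ordinary coalgebra `C`
(Proposition 2.27: `C(J) = C^{⊗J}`, `C(φ^op) = (⊗_j Δ_{φ⁻¹j})·λ^φ`, `χ^I = λ^ψ`). -/
structure Induced {S : ColaxSetting V} (C : OrdCoalgebra S) (CH : HCoalgebra S) where
  hobj : ∀ I : ℕ, CH.obj I = S.tens (fun _ : Fin I => C.pt)
  obj1 : CH.obj 1 = C.pt
  map_eq : ∀ {I J : ℕ} (φ : Fin I →o Fin J),
      CH.map φ = eqToHom (hobj J) ≫ S.tensHom (fun j => C.delta (fiberCard φ j))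
        ≫ S.lam φ (fun _ => C.pt) ≫ eqToHom (hobj I).symm
  chi_eq : ∀ {I : ℕ} (N : Fin I → ℕ) (ψ : Fin (∑ i, N i) →o Fin I) (_ : IsBlockMap N ψ)
      (h1 : S.tens (fun i => CH.obj (N i))
          = S.tens (fun i => S.tens (fun _ : Fin (fiberCard ψ i) => C.pt))),
      CH.chi N = eqToHom h1 ≫ S.lam ψ (fun _ => C.pt) ≫ eqToHom (hobj (∑ i, N i)).symm

/-- The relatively cofree homotopy coalgebra `X T̃`, characterized by
`X T̃(I) = ∏_{n ∈ ℕ^I} X^{⊗‖n‖}` together with the formulas for the structure maps. -/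
structure TildeStr (S : ColaxSetting V) (X : V) where
  T : HCoalgebra S
  /-- the projection `pr_n : X T̃(I) ⟶ X^{⊗‖n‖}` -/
  pr : ∀ {I : ℕ} (n : Fin I → ℕ), T.obj I ⟶ S.pow X (∑ i, n i)
  /-- `X T̃(I)` is the product of the `X^{⊗‖n‖}`. -/
  pr_univ : ∀ {I : ℕ} {W : V} (f : ∀ n : Fin I → ℕ, W ⟶ S.pow X (∑ i, n i)),
      ∃! u : W ⟶ T.obj I, ∀ n, u ≫ pr n = f n
  /-- `X T̃(φ^op) ≫ pr_n = pr_{φ_* n}`. -/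
  map_pr : ∀ {I J : ℕ} (φ : Fin I →o Fin J) (n : Fin I → ℕ)
      (h : S.pow X (∑ j, pushf φ n j) = S.pow X (∑ i, n i)),
      T.map φ ≫ pr n = pr (pushf φ n) ≫ eqToHom h
  /-- `χ^I_{N₁,…,N_I} ≫ pr_m = (⊗ᵢ pr_{nsᵢ}) ≫ λ^{ψ₂}` where `m = ns₁ ⊕ ⋯ ⊕ ns_I`. -/
  chi_pr : ∀ {I : ℕ} (N : Fin I → ℕ) (ns : ∀ i, Fin (N i) → ℕ) (m : Fin (∑ i, N i) → ℕ)
      (ψ : Fin (∑ i, N i) →o Fin I) (hψ : IsBlockMap N ψ)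
      (_ : ∀ (i : Fin I) (p : Fin (fiberCard ψ i)),
        m (fiberEmb ψ i p) = ns i (Fin.cast (hψ i) p))
      (ψ₂ : Fin (∑ i, ∑ p, ns i p) →o Fin I) (_ : IsBlockMap (fun i => ∑ p, ns i p) ψ₂)
      (h2 : S.tens (fun i => S.pow X (∑ p, ns i p))
          = S.tens (fun i => S.tens (fun _ : Fin (fiberCard ψ₂ i) => X)))
      (h3 : S.pow X (∑ i, ∑ p, ns i p) = S.pow X (∑ q, m q)),
      T.chi N ≫ pr m
        = S.tensHom (fun i => pr (ns i)) ≫ eqToHom h2 ≫ S.lam ψ₂ (fun _ => X) ≫ eqToHom h3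


/-- The tensor coalgebra object `XT = ⨿_k X^{⊗k}` together with its coproduct structure
and projections. -/
structure TensorObj (S : ColaxSetting V) (X : V) [Limits.HasZeroMorphisms V] where
  CT : V
  inj : ∀ k : ℕ, S.pow X k ⟶ CT
  desc : ∀ {W : V} (f : ∀ k : ℕ, S.pow X k ⟶ W), ∃! u : CT ⟶ W, ∀ k, inj k ≫ u = f k
  prk : ∀ k : ℕ, CT ⟶ S.pow X k
  inj_prk : ∀ k : ℕ, inj k ≫ prk k = 𝟙 (S.pow X k)
  inj_prk_ne : ∀ k m : ℕ, k ≠ m → inj k ≫ prk m = 0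

/-- The `ℤ×ℕ`-graded structure of the category of `ℤ×ℕ`-graded `𝕜`-modules, encoded through
a family of corepresenting objects (the free modules of rank one in each bidegree). -/
structure Bigraded (S : ColaxSetting V) [Limits.HasZeroMorphisms V] where
  gen : ℤ → ℕ → V
  /-- the `gen p i` jointly detect isomorphisms -/
  detect : ∀ {X Y : V} (u : X ⟶ Y),
      (∀ (p : ℤ) (i : ℕ), Function.Bijective (fun f : gen p i ⟶ X => f ≫ u)) → IsIso u
  /-- the second grading of a tensor product is the sum of the second gradings -/
  tens_supp : ∀ {n : ℕ} (Xs : Fin n → V),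
      (∀ (i : Fin n) (p : ℤ) (f : gen p 0 ⟶ Xs i), f = 0) →
      ∀ (p : ℤ) (j : ℕ), j < n → ∀ f : gen p j ⟶ S.tens Xs, f = 0

/-! ### Construction of block maps -/

section BlockMap

variable {I : ℕ} (n : Fin I → ℕ)

/-- partial sums: `Off n t = ∑_{i < t} n i`. -/
def Off (t : ℕ) : ℕ := ∑ i : Fin I, if i.1 < t then n i else 0

theorem Off_mono {t t' : ℕ} (h : t ≤ t') : Off n t ≤ Off n t' := by
  apply Finset.sum_le_sum
  intro i _
  by_cases hi : i.1 < t
  · rw [if_pos hi, if_pos (lt_of_lt_of_le hi h)]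
  · rw [if_neg hi]; exact Nat.zero_le _

theorem Off_zero : Off n 0 = 0 := by
  unfold Off
  apply Finset.sum_eq_zero
  intro i _
  simp

theorem Off_succ {t : ℕ} (ht : t < I) : Off n (t + 1) = Off n t + n ⟨t, ht⟩ := by
  unfold Off
  have : ∀ i : Fin I, (if i.1 < t + 1 then n i else 0)
      = (if i.1 < t then n i else 0) + (if i = ⟨t, ht⟩ then n i else 0) := by
    intro i
    rcases Nat.lt_trichotomy i.1 t with h | h | h
    · rw [if_pos (Nat.lt_succ_of_lt h), if_pos h, if_neg (by
        intro he; rw [he] at h; exact absurd h (lt_irrefl t)), Nat.add_zero]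
    · rw [if_pos (by omega), if_neg (by omega), if_pos (by
        apply Fin.ext; exact h), Nat.zero_add]
    · rw [if_neg (by omega), if_neg (by omega), if_neg (by
        intro he; rw [he] at h; simp at h)]
  rw [Finset.sum_congr rfl (fun i _ => this i), Finset.sum_add_distrib,
    Finset.sum_ite_eq' Finset.univ (⟨t, ht⟩ : Fin I) n, if_pos (Finset.mem_univ _)]

theorem Off_total : Off n I = ∑ i, n i := by
  unfold Off
  apply Finset.sum_congr rfl
  intro i _
  rw [if_pos i.isLt]

theorem Off_add_le (i : Fin I) : Off n i.1 + n i ≤ ∑ j, n j := by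
  rw [← Off_succ n i.isLt, ← Off_total n]
  exact Off_mono n i.isLt

/-- The set of indices `i` whose block starts at or before `q`. -/
theorem blockSet_nonempty (q : Fin (∑ i, n i)) :
    (Finset.univ.filter fun i : Fin I => Off n i.1 ≤ q.1).Nonempty := by
  have hI : 0 < I := by
    by_contra h
    have : I = 0 := by omega
    subst this
    have : (∑ i : Fin 0, n i) = 0 := rfl
    rw [this] at q
    exact absurd q.2 (by omega)
  exact ⟨⟨0, hI⟩, by simp [Off_zero n]⟩

/-- The block map `ψ : ⊔ᵢ nᵢ → I`. -/
def blockFun (q : Fin (∑ i, n i)) : Fin I :=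
  (Finset.univ.filter fun i : Fin I => Off n i.1 ≤ q.1).max' (blockSet_nonempty n q)

theorem blockFun_le (q : Fin (∑ i, n i)) : Off n (blockFun n q).1 ≤ q.1 := by
  have := Finset.max'_mem _ (blockSet_nonempty n q)
  exact (Finset.mem_filter.mp this).2

theorem blockFun_lt (q : Fin (∑ i, n i)) : q.1 < Off n ((blockFun n q).1 + 1) := by
  by_contra h
  push_neg at h
  rcases Nat.lt_or_ge ((blockFun n q).1 + 1) I with hI | hI
  · have hmem : (⟨(blockFun n q).1 + 1, hI⟩ : Fin I) ∈
        Finset.univ.filter fun j : Fin I => Off n j.1 ≤ q.1 :=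
      Finset.mem_filter.mpr ⟨Finset.mem_univ _, h⟩
    have h2 : (⟨(blockFun n q).1 + 1, hI⟩ : Fin I) ≤ blockFun n q :=
      Finset.le_max' _ _ hmem
    have h3 := Fin.le_def.mp h2
    simp at h3
  · have h1 : Off n I ≤ Off n ((blockFun n q).1 + 1) := Off_mono n hI
    rw [Off_total n] at h1
    have := q.2
    omega

theorem blockFun_eq_iff (q : Fin (∑ i, n i)) (i : Fin I) :
    blockFun n q = i ↔ Off n i.1 ≤ q.1 ∧ q.1 < Off n i.1 + n i := by
  constructor
  · intro h
    subst h
    refine ⟨blockFun_le n q, ?_⟩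
    have := blockFun_lt n q
    rwa [Off_succ n (blockFun n q).isLt, Fin.eta] at this
  · rintro ⟨h1, h2⟩
    have hmem : i ∈ Finset.univ.filter fun j : Fin I => Off n j.1 ≤ q.1 :=
      Finset.mem_filter.mpr ⟨Finset.mem_univ _, h1⟩
    have hle : i ≤ blockFun n q := Finset.le_max' _ _ hmem
    rcases eq_or_lt_of_le hle with h | h
    · exact h.symm
    · exfalso
      have hlt : i.1 + 1 ≤ (blockFun n q).1 := Fin.lt_def.mp h
      have h3 : Off n (i.1 + 1) ≤ Off n (blockFun n q).1 := Off_mono n hlt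
      have h4 := blockFun_le n q
      rw [Off_succ n i.isLt, Fin.eta] at h3
      omega

theorem blockFun_monotone : Monotone (blockFun n) := by
  intro q q' hq
  apply Finset.max'_le
  intro i hi
  apply Finset.le_max'
  rw [Finset.mem_filter] at hi ⊢
  exact ⟨Finset.mem_univ _, le_trans hi.2 hq⟩

/-- The block map as an order homomorphism. -/
def blockMap : Fin (∑ i, n i) →o Fin I := ⟨blockFun n, blockFun_monotone n⟩

theorem blockMap_isBlockMap : IsBlockMap n (blockMap n) := by
  intro i
  unfold fiberCard
  have him : (Finset.univ.filter fun q : Fin (∑ j, n j) => blockMap n q = i)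
      = Finset.image (fun a : Fin (n i) => (⟨Off n i.1 + a.1, by
          have h1 := Off_add_le n i
          have h2 := a.2
          omega⟩ : Fin (∑ j, n j))) Finset.univ := by
    ext q
    simp only [Finset.mem_filter, Finset.mem_univ, true_and, Finset.mem_image]
    constructor
    · intro hq
      have hq' : blockFun n q = i := hq
      have hh := (blockFun_eq_iff n q i).mp hq'
      exact ⟨⟨q.1 - Off n i.1, by omega⟩, by apply Fin.ext; simp; omega⟩
    · rintro ⟨a, -, rfl⟩
      show blockFun n _ = i
      rw [blockFun_eq_iff]
      have h2 := a.2
      exact ⟨by simp, by simp⟩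
  rw [him, Finset.card_image_of_injective _ (fun a b hab => by
      apply Fin.ext
      have := congrArg Fin.val hab
      simp at this
      exact this),
    Finset.card_univ, Fintype.card_fin]

end BlockMap

theorem exists_blockMap {I : ℕ} (n : Fin I → ℕ) :
    ∃ ψ : Fin (∑ i, n i) →o Fin I, IsBlockMap n ψ :=
  ⟨blockMap n, blockMap_isBlockMap n⟩

theorem tensHom_eqToHom (S : ColaxSetting V) {k : ℕ} {A B : Fin k → V} (h : A = B) :
    S.tensHom (fun i => eqToHom (congrFun h i)) = eqToHom (congrArg S.tens h) := by
  subst h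
  simp only [eqToHom_refl]
  rw [S.tensHom_id]

/-- A map from a generator into a tensor product of powers of `X` of total weight `> j`
vanishes. -/
theorem hom_tens_pow_zero [Preadditive V] {S : ColaxSetting V} (M : S.Monoidal)
    (G : Bigraded S) (X : V) (hX : ∀ (p : ℤ) (f : G.gen p 0 ⟶ X), f = 0)
    {I : ℕ} (k : Fin I → ℕ) (p : ℤ) (j : ℕ) (hj : j < ∑ i, k i)
    (f : G.gen p j ⟶ S.tens (fun i => S.pow X (k i))) : f = 0 := by
  have h2 : S.tens (fun i => S.pow X (k i))
      = S.tens (fun i => S.tens (fun _ : Fin (fiberCard (blockMap k) i) => X)) := by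
    apply congrArg S.tens
    funext i
    rw [blockMap_isBlockMap k i]
    rfl
  have hg : (f ≫ eqToHom h2) ≫ S.lam (blockMap k) (fun _ : Fin (∑ i, k i) => X) = 0 :=
    G.tens_supp (fun _ : Fin (∑ i, k i) => X) (fun _ q g => hX q g) p j hj _
  have key : eqToHom h2 ≫ (S.lam (blockMap k) (fun _ : Fin (∑ i, k i) => X)
      ≫ M.lamInv (blockMap k) (fun _ : Fin (∑ i, k i) => X)) ≫ eqToHom h2.symm = 𝟙 _ := by
    rw [M.lam_lamInv, Category.id_comp, eqToHom_trans, eqToHom_refl]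
  calc f = f ≫ eqToHom h2 ≫ (S.lam (blockMap k) (fun _ : Fin (∑ i, k i) => X)
          ≫ M.lamInv (blockMap k) (fun _ : Fin (∑ i, k i) => X)) ≫ eqToHom h2.symm := by
        rw [key, Category.comp_id]
    _ = ((f ≫ eqToHom h2) ≫ S.lam (blockMap k) (fun _ : Fin (∑ i, k i) => X))
          ≫ M.lamInv (blockMap k) (fun _ : Fin (∑ i, k i) => X) ≫ eqToHom h2.symm := by
        simp only [Category.assoc]
    _ = 0 := by rw [hg, zero_comp]

/-- Off-diagonal terms vanish: for `m ≠ k`, any composite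
`gen → ⊗ᵢ X^{⊗mᵢ} → ⊗ᵢ X^{⊗kᵢ}` through `⊗(inj ≫ prk)` is zero. -/
theorem offdiag_zero [Preadditive V] {S : ColaxSetting V} (M : S.Monoidal)
    (G : Bigraded S) (X : V) (hX : ∀ (p : ℤ) (f : G.gen p 0 ⟶ X), f = 0)
    (CX : TensorObj S X) {I : ℕ} (m k : Fin I → ℕ) (hne : m ≠ k) (p : ℤ) (j : ℕ)
    (g : G.gen p j ⟶ S.tens (fun i => S.pow X (m i))) :
    g ≫ S.tensHom (fun i => CX.inj (m i) ≫ CX.prk (k i)) = 0 := by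
  classical
  obtain ⟨i0, hi0⟩ := Function.ne_iff.mp hne
  have hmZ : ∀ i : Fin I, i ≠ i0 → m i = (if i = i0 then j + 1 else m i) := by
    intro i h; rw [if_neg h]
  have hZm : ∀ i : Fin I, i ≠ i0 → (if i = i0 then j + 1 else m i) = m i := by
    intro i h; rw [if_neg h]
  have hstep : S.tensHom (fun i => CX.inj (m i) ≫ CX.prk (k i))
      = S.tensHom (fun i => if h : i = i0 then
            (0 : S.pow X (m i) ⟶ S.pow X (if i = i0 then j + 1 else m i))
          else eqToHom (S.pow_eq X (hmZ i h)))
        ≫ S.tensHom (fun i => if h : i = i0 then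
            (0 : S.pow X (if i = i0 then j + 1 else m i) ⟶ S.pow X (k i))
          else eqToHom (S.pow_eq X (hZm i h)) ≫ CX.inj (m i) ≫ CX.prk (k i)) := by
    rw [← S.tensHom_comp]
    apply congrArg S.tensHom
    funext i
    by_cases h : i = i0
    · subst h
      rw [dif_pos rfl, dif_pos rfl, zero_comp]
      exact CX.inj_prk_ne _ _ hi0
    · rw [dif_neg h, dif_neg h]
      simp
  have hZsum : j < ∑ i, (if i = i0 then j + 1 else m i) := by
    have hle : (if i0 = i0 then j + 1 else m i0) ≤ ∑ i, (if i = i0 then j + 1 else m i) :=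
      Finset.single_le_sum (f := fun i => if i = i0 then j + 1 else m i)
        (fun _ _ => Nat.zero_le _) (Finset.mem_univ i0)
    rw [if_pos rfl] at hle
    omega
  have hga : g ≫ S.tensHom (fun i => if h : i = i0 then
        (0 : S.pow X (m i) ⟶ S.pow X (if i = i0 then j + 1 else m i))
      else eqToHom (S.pow_eq X (hmZ i h))) = 0 :=
    hom_tens_pow_zero M G X hX (fun i => if i = i0 then j + 1 else m i) p j hZsum _
  rw [hstep, ← Category.assoc, hga, zero_comp]

theorem statement_17 [Preadditive V] {S : ColaxSetting V} (M : S.Monoidal) (G : Bigraded S)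
    (X : V)
    -- `X^p_0 = 0`:
    (_ : ∀ (p : ℤ) (f : G.gen p 0 ⟶ X), f = 0)
    -- the tensor coalgebra `XT` with the cut comultiplication, as a homotopy coalgebra:
    (CX : TensorObj S X) (CTord : OrdCoalgebra S) (hpt : CTord.pt = CX.CT)
    (CTH : HCoalgebra S) (iCT : Induced CTord CTH)
    -- the cut comultiplication satisfies `Δ_I ≫ (⊗ᵢ pr_{nᵢ}) ≫ λ^ψ = pr_{‖n‖}`:
    (_ : ∀ {I : ℕ} (n : Fin I → ℕ) (ψ : Fin (∑ i, n i) →o Fin I) (_ : IsBlockMap n ψ)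
      (h2 : S.tens (fun i => S.pow X (n i))
        = S.tens (fun i => S.tens (fun _ : Fin (fiberCard ψ i) => X))),
      CTord.delta I ≫ S.tensHom (fun i => eqToHom hpt ≫ CX.prk (n i)) ≫ eqToHom h2
          ≫ S.lam ψ (fun _ => X)
        = eqToHom hpt ≫ CX.prk (∑ i, n i))
    -- `X T̃`:
    (TX : TildeStr S X)
    -- in each bidegree, `XT^{⊗I}` is the direct sum of the components `X^{⊗‖n‖}`:
    (_ : ∀ (I : ℕ) (p : ℤ) (j : ℕ) (h3 : S.tens (fun _ : Fin I => CX.CT) = CTH.obj I)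
      (f : G.gen p j ⟶ CTH.obj I),
      ∃ (s : Finset (Fin I → ℕ)) (g : ∀ n : Fin I → ℕ,
          G.gen p j ⟶ S.tens (fun i => S.pow X (n i))),
        f = ∑ n ∈ s, g n ≫ S.tensHom (fun i => CX.inj (n i)) ≫ eqToHom h3)
    -- `e : XT → X T̃`, the homotopy coalgebra morphism with `e(I)·pr_n = (⊗ᵢpr_{nᵢ})·λ^ψ`:
    (e : HCoalgHom CTH TX.T)
    (_ : ∀ {I : ℕ} (n : Fin I → ℕ) (ψ : Fin (∑ i, n i) →o Fin I) (_ : IsBlockMap n ψ)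
      (h2 : S.tens (fun i => S.pow X (n i))
          = S.tens (fun i => S.tens (fun _ : Fin (fiberCard ψ i) => X))),
      e.app I ≫ TX.pr n
        = eqToHom (iCT.hobj I) ≫ S.tensHom (fun i => eqToHom hpt ≫ CX.prk (n i))
            ≫ eqToHom h2 ≫ S.lam ψ (fun _ => X)) :
    -- then `e` is an isomorphism of homotopy coalgebras:
    ∃ einv : HCoalgHom TX.T CTH,
      (∀ n : ℕ, e.app n ≫ einv.app n = 𝟙 (CTH.obj n)) ∧
      (∀ n : ℕ, einv.app n ≫ e.app n = 𝟙 (TX.T.obj n)) := by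
  rename_i hX hcut hdec hEpr
  clear hcut
  classical
  have h3 : ∀ I : ℕ, S.tens (fun _ : Fin I => CX.CT) = CTH.obj I := by
    intro I
    rw [iCT.hobj I, hpt]
  have h2 : ∀ {I : ℕ} (m : Fin I → ℕ), S.tens (fun i => S.pow X (m i))
      = S.tens (fun i => S.tens (fun _ : Fin (fiberCard (blockMap m) i) => X)) := by
    intro I m
    apply congrArg S.tens
    funext i
    rw [blockMap_isBlockMap m i]
    rfl
  have hiso : ∀ I : ℕ, IsIso (e.app I) := by
    intro I
    have hDD : ∀ m : Fin I → ℕ,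
        (eqToHom (h2 m) ≫ S.lam (blockMap m) (fun _ : Fin (∑ i, m i) => X))
          ≫ M.lamInv (blockMap m) (fun _ : Fin (∑ i, m i) => X) ≫ eqToHom (h2 m).symm
        = 𝟙 _ := by
      intro m
      rw [Category.assoc,
        ← Category.assoc (S.lam (blockMap m) (fun _ : Fin (∑ i, m i) => X)),
        M.lam_lamInv, Category.id_comp, eqToHom_trans]
      simp
    have hK : ∀ m k : Fin I → ℕ,
        S.tensHom (fun i => CX.inj (m i)) ≫ eqToHom (h3 I) ≫ e.app I ≫ TX.pr k
        = S.tensHom (fun i => CX.inj (m i) ≫ CX.prk (k i))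
            ≫ eqToHom (h2 k) ≫ S.lam (blockMap k) (fun _ : Fin (∑ i, k i) => X) := by
      intro m k
      rw [hEpr k (blockMap k) (blockMap_isBlockMap k) (h2 k)]
      have h4 : (fun _ : Fin I => CX.CT) = (fun _ : Fin I => CTord.pt) :=
        funext fun _ => hpt.symm
      have e1 : eqToHom (h3 I) ≫ eqToHom (iCT.hobj I)
          = S.tensHom (fun _ : Fin I => eqToHom hpt.symm) := by
        rw [eqToHom_trans, ← tensHom_eqToHom S h4]
      erw [← Category.assoc (eqToHom (h3 I)), e1]
      erw [← Category.assoc (S.tensHom fun i => CX.inj (m i)),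
        ← Category.assoc ((S.tensHom fun i => CX.inj (m i)) ≫ _)]
      rw [← S.tensHom_comp, ← S.tensHom_comp]
      congr 1
      apply congrArg S.tensHom
      funext i
      simp
    have hKd : ∀ m : Fin I → ℕ,
        S.tensHom (fun i => CX.inj (m i)) ≫ eqToHom (h3 I) ≫ e.app I ≫ TX.pr m
        = eqToHom (h2 m) ≫ S.lam (blockMap m) (fun _ : Fin (∑ i, m i) => X) := by
      intro m
      rw [hK m m]
      simp only [CX.inj_prk, S.tensHom_id, Category.id_comp]
      rfl
    apply G.detect
    intro p j
    refine ⟨?_, ?_⟩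
    · -- injectivity
      intro f f' hff'
      have hff2 : f ≫ e.app I = f' ≫ e.app I := hff'
      have hd : (f - f') ≫ e.app I = 0 := by
        rw [Preadditive.sub_comp, hff2, sub_self]
      obtain ⟨s, g, hg⟩ := hdec I p j (h3 I) (f - f')
      have h6 : ∀ m ∈ s, g m = 0 := by
        intro m hm
        have h5 : (f - f') ≫ e.app I ≫ TX.pr m = 0 := by
          rw [← Category.assoc, hd, zero_comp]
        rw [hg, Preadditive.sum_comp] at h5
        have hoff : ∀ n ∈ s, n ≠ m →
            (g n ≫ S.tensHom (fun i => CX.inj (n i)) ≫ eqToHom (h3 I))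
              ≫ e.app I ≫ TX.pr m = 0 := by
          intro n _ hnm
          simp only [Category.assoc]
          rw [hK n m]
          erw [← Category.assoc (g n), offdiag_zero M G X hX CX n m hnm p j (g n), zero_comp]
        rw [Finset.sum_eq_single_of_mem m hm hoff] at h5
        simp only [Category.assoc] at h5
        rw [hKd m] at h5
        calc g m = (g m ≫ eqToHom (h2 m)
              ≫ S.lam (blockMap m) (fun _ : Fin (∑ i, m i) => X))
              ≫ M.lamInv (blockMap m) (fun _ : Fin (∑ i, m i) => X)
              ≫ eqToHom (h2 m).symm := by
              rw [Category.assoc, hDD m, Category.comp_id]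
          _ = 0 := by erw [h5, zero_comp]
      have hz : f - f' = 0 := by
        rw [hg]
        apply Finset.sum_eq_zero
        intro m hm
        rw [h6 m hm, zero_comp]
      exact sub_eq_zero.mp hz
    · -- surjectivity
      intro u
      set sj : Finset (Fin I → ℕ) :=
        (Finset.univ : Finset (Fin I → Fin (j + 1))).image (fun m i => (m i : ℕ)) with hsj
      have hmem : ∀ k : Fin I → ℕ, k ∈ sj ↔ ∀ i, k i ≤ j := by
        intro k
        rw [hsj]
        simp only [Finset.mem_image, Finset.mem_univ, true_and]
        constructor
        · rintro ⟨a, rfl⟩ i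
          exact Nat.lt_succ_iff.mp (a i).2
        · intro h
          exact ⟨fun i => ⟨k i, Nat.lt_succ_of_le (h i)⟩, rfl⟩
      refine ⟨∑ m ∈ sj, (u ≫ TX.pr m)
          ≫ (M.lamInv (blockMap m) (fun _ : Fin (∑ i, m i) => X) ≫ eqToHom (h2 m).symm)
          ≫ S.tensHom (fun i => CX.inj (m i)) ≫ eqToHom (h3 I), ?_⟩
      show (∑ m ∈ sj, (u ≫ TX.pr m)
          ≫ (M.lamInv (blockMap m) (fun _ : Fin (∑ i, m i) => X) ≫ eqToHom (h2 m).symm)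
          ≫ S.tensHom (fun i => CX.inj (m i)) ≫ eqToHom (h3 I)) ≫ e.app I = u
      have h8 : ∀ k : Fin I → ℕ, (∑ m ∈ sj, (u ≫ TX.pr m)
          ≫ (M.lamInv (blockMap m) (fun _ : Fin (∑ i, m i) => X) ≫ eqToHom (h2 m).symm)
          ≫ S.tensHom (fun i => CX.inj (m i)) ≫ eqToHom (h3 I))
            ≫ e.app I ≫ TX.pr k = u ≫ TX.pr k := by
        intro k
        rw [Preadditive.sum_comp]
        have hterm : ∀ m : Fin I → ℕ, m ≠ k → ((u ≫ TX.pr m)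
            ≫ (M.lamInv (blockMap m) (fun _ : Fin (∑ i, m i) => X) ≫ eqToHom (h2 m).symm)
            ≫ S.tensHom (fun i => CX.inj (m i)) ≫ eqToHom (h3 I))
              ≫ e.app I ≫ TX.pr k = 0 := by
          intro m hmk
          simp only [Category.assoc]
          rw [hK m k]
          erw [← Category.assoc u, ← Category.assoc (u ≫ TX.pr m),
            ← Category.assoc ((u ≫ TX.pr m) ≫ _)]
          erw [offdiag_zero M G X hX CX m k hmk p j
            ((u ≫ TX.pr m) ≫ (M.lamInv (blockMap m) (fun _ : Fin (∑ i, m i) => X)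
              ≫ eqToHom (h2 m).symm)), zero_comp]
        by_cases hk : k ∈ sj
        · rw [Finset.sum_eq_single_of_mem k hk (fun n _ hnk => hterm n hnk)]
          simp only [Category.assoc]
          rw [hKd k]
          erw [Category.assoc (M.lamInv _ _), eqToHom_trans_assoc, eqToHom_refl,
            Category.id_comp, M.lamInv_lam]
          have hci : TX.pr k ≫ 𝟙 (S.tens fun _ : Fin (∑ i, k i) => X) = TX.pr k :=
            Category.comp_id _
          erw [hci]
        · rw [Finset.sum_eq_zero (fun n hn => hterm n (fun he => hk (he ▸ hn)))]
          have hjk : j < ∑ i, k i := by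
            by_contra hle
            push_neg at hle
            exact hk ((hmem k).mpr (fun i => le_trans
              (Finset.single_le_sum (f := k) (fun _ _ => Nat.zero_le _)
                (Finset.mem_univ i)) hle))
          erw [G.tens_supp (fun _ : Fin (∑ i, k i) => X) (fun _ q g => hX q g) p j hjk
            (u ≫ TX.pr k)]
          rfl
      obtain ⟨v, -, hv⟩ := TX.pr_univ (fun k : Fin I → ℕ => u ≫ TX.pr k)
      exact (hv _ (fun k => by rw [Category.assoc]; exact h8 k)).trans
        (hv u (fun k => rfl)).symm
  letI : ∀ n : ℕ, IsIso (e.app n) := hiso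
  refine ⟨{ app := fun n => inv (e.app n), naturality := ?_, monoidality := ?_ },
    fun n => IsIso.hom_inv_id _, fun n => IsIso.inv_hom_id _⟩
  · intro I J φ
    rw [IsIso.inv_comp_eq, ← Category.assoc, e.naturality φ, Category.assoc,
      IsIso.hom_inv_id, Category.comp_id]
  · intro I N
    rw [IsIso.eq_comp_inv, Category.assoc, ← e.monoidality N, ← Category.assoc,
      ← S.tensHom_comp]
    simp only [IsIso.inv_hom_id]
    rw [S.tensHom_id, Category.id_comp]

end Paper
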